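/- Let d ≥ 2, s ∈ {0,1}^d, let f be a generator, and let U = (U_1,…,U_d) be a random vector in [0,1]^d whose law has density c_f^s with respect to Lebesgue measure. Then for every t ∈ {0,1}^d with t ∉ {s, 1−s} (where 1−s denotes the componentwise complement of s), the random variable frac(Σ_{j=1}^d (−1)^{t_j} U_j) is uniformly distributed on [0,1]. -/

import Mathlib

open MeasureTheory

theorem Real.fact_zero_lt_one : Fact ((0:ℝ) < 1) := ⟨one_pos⟩

open Set in
attribute [local instance] Real.fact_zero_lt_one in
private lemma aux_lift_eq (g : ℝ → ENNReal) (hper : ∀ (x : ℝ) (n : ℤ), g (x + n) = g x) (x : ℝ) :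
    g ((AddCircle.measurableEquivIoc (T := (1:ℝ)) 0 ((x : ℝ) : UnitAddCircle) : ℝ)) = g x := by
  have h1 : (AddCircle.measurableEquivIoc (T := (1:ℝ)) 0 ((x : ℝ) : UnitAddCircle) : ℝ)
      = toIocMod one_pos 0 x := by
    show ((AddCircle.equivIoc (1:ℝ) 0 ((x : ℝ) : UnitAddCircle) : ℝ)) = _
    rw [AddCircle.equivIoc, QuotientAddGroup.equivIocMod_coe]
  rw [h1, ← self_sub_toIocDiv_zsmul one_pos 0 x]
  have : x - toIocDiv one_pos 0 x • (1:ℝ) = x + ((- toIocDiv one_pos 0 x : ℤ) : ℝ) := by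
    push_cast
    rw [zsmul_eq_mul]
    ring
  rw [this, hper]

open Set in
attribute [local instance] Real.fact_zero_lt_one in
private lemma aux_key (g : ℝ → ENNReal) (hg : Measurable g)
    (hper : ∀ (x : ℝ) (n : ℤ), g (x + n) = g x) (m : ℤ) (hm : m ≠ 0) (c : ℝ) :
    ∫⁻ x in Icc (0:ℝ) 1, g (c + m * x) = ∫⁻ x in Icc (0:ℝ) 1, g x := by
  have hIcc : (volume : Measure ℝ).restrict (Icc 0 1) = volume.restrict (Ioc 0 (0+1)) := by
    rw [zero_add]
    exact (Measure.restrict_congr_set Ioc_ae_eq_Icc).symm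
  set G : UnitAddCircle → ENNReal :=
    fun q => g ((AddCircle.measurableEquivIoc (T := (1:ℝ)) 0 q : ℝ)) with hG
  have hGm : Measurable G :=
    hg.comp (measurable_subtype_coe.comp (AddCircle.measurableEquivIoc (T := (1:ℝ)) 0).measurable)
  have hGg : ∀ x : ℝ, G ((x : ℝ) : UnitAddCircle) = g x := fun x => aux_lift_eq g hper x
  have mp1 := AddCircle.measurePreserving_mk (1:ℝ) 0
  have mp2 : MeasurePreserving (fun q : AddCircle 1 => ((c:ℝ) : UnitAddCircle) + m • q)
      volume volume :=
    (measurePreserving_add_left volume _).comp (Measure.measurePreserving_zsmul volume hm)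
  calc ∫⁻ x in Icc (0:ℝ) 1, g (c + m * x)
      = ∫⁻ x in Ioc (0:ℝ) (0+1), G (((c:ℝ) : UnitAddCircle) + m • ((x:ℝ) : UnitAddCircle)) := by
        rw [hIcc]
        refine lintegral_congr fun x => ?_
        have : (((c + m * x : ℝ)) : UnitAddCircle)
            = ((c:ℝ) : UnitAddCircle) + m • ((x:ℝ) : UnitAddCircle) := by
          rw [← zsmul_eq_mul]
          norm_cast
        rw [← this, hGg]
    _ = ∫⁻ q, G (((c:ℝ) : UnitAddCircle) + m • q) ∂volume :=
        mp1.lintegral_comp (hGm.comp ((measurable_const_add _).comp (measurable_const_smul m)))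
    _ = ∫⁻ q, G q ∂volume := mp2.lintegral_comp hGm
    _ = ∫⁻ x in Ioc (0:ℝ) (0+1), G ((x:ℝ) : UnitAddCircle) := (mp1.lintegral_comp hGm).symm
    _ = ∫⁻ x in Icc (0:ℝ) 1, g x := by
        rw [← hIcc]; exact lintegral_congr fun x => hGg x

open Set in
private lemma aux_pi_box (d : ℕ) :
    (volume : Measure (Fin d → ℝ)).restrict (Set.univ.pi fun _ : Fin d => Icc (0:ℝ) 1)
      = Measure.pi (fun _ : Fin d => (volume : Measure ℝ).restrict (Icc (0:ℝ) 1)) := by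
  refine (Measure.pi_eq (μ := fun _ : Fin d => (volume : Measure ℝ).restrict (Icc (0:ℝ) 1))
    fun s hs => ?_).symm
  rw [Measure.restrict_apply (MeasurableSet.univ_pi hs), ← pi_inter_distrib, volume_pi_pi]
  exact Finset.prod_congr rfl fun i _ => (Measure.restrict_apply (hs i)).symm

/-- A generator: a probability density on `[0,1]`. -/
def IsGenerator (f : ℝ → ℝ) : Prop :=
  Measurable f ∧ (∀ x ∈ Set.Icc (0:ℝ) 1, 0 ≤ f x) ∧ ∫ x in Set.Icc (0:ℝ) 1, f x = 1

theorem stmt_4 (d : ℕ) (hd : 2 ≤ d) (s : Fin d → Bool) (f : ℝ → ℝ) (hf : IsGenerator f)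
    (μ : Measure (Fin d → ℝ))
    (hμ : μ = (volume.restrict (Set.univ.pi fun _ : Fin d => Set.Icc (0:ℝ) 1)).withDensity
      (fun u => ENNReal.ofReal (f (Int.fract (∑ k : Fin d, if s k then 1 - u k else u k)))))
    (t : Fin d → Bool) (ht1 : t ≠ s) (ht2 : t ≠ fun j => !(s j)) :
    Measure.map (fun u : Fin d → ℝ => Int.fract (∑ j : Fin d, if t j then -(u j) else u j)) μ
      = volume.restrict (Set.Icc (0:ℝ) 1) := by
  classical
  obtain ⟨hfm, hfnn, hfint⟩ := hf
  have hfi : Integrable f (volume.restrict (Set.Icc (0:ℝ) 1)) := by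
    by_contra h
    rw [integral_undef h] at hfint
    exact one_ne_zero hfint.symm
  -- pick indices a (t a = s a) and b (t b ≠ s b)
  obtain ⟨b, hbne⟩ : ∃ b, t b ≠ s b := by
    by_contra h; push_neg at h; exact ht1 (funext h)
  obtain ⟨a, haeq⟩ : ∃ a, t a = s a := by
    by_contra h; push_neg at h
    refine ht2 (funext fun j => ?_)
    have hj := h j
    rcases Bool.eq_false_or_eq_true (s j) with h1 | h1 <;>
      rcases Bool.eq_false_or_eq_true (t j) with h2 | h2 <;>
      simp [h1, h2] at hj ⊢
  have hab : a ≠ b := fun h => hbne (h ▸ haeq)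
  -- signed coefficients
  set ct : Fin d → ℤ := fun j => if t j then -1 else 1 with hct
  set cs : Fin d → ℤ := fun j => if s j then -1 else 1 with hcs
  have hcta : ct a = cs a := by simp only [hct, hcs, haeq]
  have hctane : ct a ≠ 0 := by simp only [hct]; split <;> omega
  have hdbne : ct b - cs b ≠ 0 := by
    simp only [hct, hcs]
    rcases Bool.eq_false_or_eq_true (t b) with h2 | h2 <;>
      rcases Bool.eq_false_or_eq_true (s b) with h1 | h1 <;> simp_all <;> omega
  -- measurability of the map
  have hsum_m : ∀ c : Fin d → ℤ, Measurable (fun u : Fin d → ℝ => ∑ j, (c j : ℝ) * u j) :=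
    fun c => Finset.measurable_sum _ fun j _ => (measurable_pi_apply j).const_mul _
  have hTsum : ∀ u : Fin d → ℝ,
      (∑ j, if t j then -(u j) else u j) = ∑ j, (ct j : ℝ) * u j := by
    intro u
    refine Finset.sum_congr rfl fun j _ => ?_
    by_cases h : t j <;> simp [hct, h]
  have hTm : Measurable (fun u : Fin d → ℝ =>
      Int.fract (∑ j : Fin d, if t j then -(u j) else u j)) := by
    apply measurable_fract.comp
    apply Finset.measurable_sum _ fun j _ => ?_
    by_cases h : t j <;> simp only [h, if_true, if_false] <;>
      exact (by measurability)
  refine Measure.ext fun A hA => ?_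
  rw [Measure.map_apply hTm hA]
  -- the basic functions
  set Nf : ℝ → ENNReal := fun x => Set.indicator A (fun _ => 1) (Int.fract x) with hNf
  set Ff : ℝ → ENNReal := fun x => ENNReal.ofReal (f (Int.fract x)) with hFf
  have hNm : Measurable Nf := (measurable_const.indicator hA).comp measurable_fract
  have hFm : Measurable Ff := ENNReal.measurable_ofReal.comp (hfm.comp measurable_fract)
  have hNper : ∀ (x : ℝ) (n : ℤ), Nf (x + n) = Nf x := by
    intro x n; simp only [hNf, Int.fract_add_intCast]
  have hFper : ∀ (x : ℝ) (n : ℤ), Ff (x + n) = Ff x := by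
    intro x n; simp only [hFf, Int.fract_add_intCast]
  -- the integrand over the cube
  set g : (Fin d → ℝ) → ENNReal :=
    fun u => Nf (∑ j, (ct j : ℝ) * u j) * Ff (∑ j, (cs j : ℝ) * u j) with hg
  have hgm : Measurable g := ((hNm.comp (hsum_m ct)).mul (hFm.comp (hsum_m cs)))
  -- reduce the LHS to a lintegral over the product measure
  have hμA : μ ((fun u : Fin d → ℝ =>
        Int.fract (∑ j : Fin d, if t j then -(u j) else u j)) ⁻¹' A)
      = ∫⁻ u, g u ∂Measure.pi (fun _ : Fin d => volume.restrict (Set.Icc (0:ℝ) 1)) := by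
    rw [hμ, withDensity_apply _ (hTm hA), ← aux_pi_box d, ← lintegral_indicator (hTm hA) _]
    refine lintegral_congr fun u => ?_
    have hM : (∑ k, if s k then 1 - u k else u k)
        = ∑ j, (cs j : ℝ) * u j + ((∑ k, if s k then (1:ℤ) else 0 : ℤ) : ℝ) := by
      push_cast
      rw [← Finset.sum_add_distrib]
      refine Finset.sum_congr rfl fun k _ => ?_
      by_cases h : s k <;> simp [hcs, h] <;> ring
    by_cases hu : Int.fract (∑ j : Fin d, if t j then -(u j) else u j) ∈ A
    · rw [Set.indicator_of_mem (by exact hu)]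
      have h1 : Nf (∑ j, (ct j : ℝ) * u j) = 1 := by
        show Set.indicator A (fun _ => 1) (Int.fract (∑ j, (ct j : ℝ) * u j)) = 1
        rw [← hTsum u]; exact Set.indicator_of_mem hu _
      show ENNReal.ofReal (f (Int.fract (∑ k, if s k then 1 - u k else u k)))
          = Nf (∑ j, (ct j : ℝ) * u j) * Ff (∑ j, (cs j : ℝ) * u j)
      rw [h1, one_mul, hM, Int.fract_add_intCast]
    · rw [Set.indicator_of_notMem (by exact hu)]
      have h1 : Nf (∑ j, (ct j : ℝ) * u j) = 0 := by
        show Set.indicator A (fun _ => 1) (Int.fract (∑ j, (ct j : ℝ) * u j)) = 0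
        rw [← hTsum u]; exact Set.indicator_of_notMem hu _
      show (0 : ENNReal)
          = Nf (∑ j, (ct j : ℝ) * u j) * Ff (∑ j, (cs j : ℝ) * u j)
      rw [h1, zero_mul]
  rw [hμA]
  -- finset bookkeeping
  set w : Finset (Fin d) := (Finset.univ.erase a).erase b with hw
  have hbw : b ∉ w := Finset.notMem_erase _ _
  have hbins : insert b w = Finset.univ.erase a := by
    rw [hw, Finset.insert_erase (Finset.mem_erase.2 ⟨fun h => hab h.symm, Finset.mem_univ b⟩)]
  have hains : a ∉ insert b w := by rw [hbins]; exact Finset.notMem_erase _ _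
  have huniv : insert a (insert b w) = Finset.univ := by
    rw [hbins, Finset.insert_erase (Finset.mem_univ a)]
  -- update-sum lemma
  have hupd : ∀ (S : Finset (Fin d)) (i : Fin d), i ∈ S → ∀ (x : Fin d → ℝ) (xi : ℝ)
      (c : Fin d → ℤ), (∑ j ∈ S, (c j : ℝ) * Function.update x i xi j)
        = (c i : ℝ) * xi + ∑ j ∈ S.erase i, (c j : ℝ) * x j := by
    intro S i hi x xi c
    rw [← Finset.add_sum_erase _ (fun j => (c j : ℝ) * Function.update x i xi j) hi,
      Function.update_self]
    congr 1
    refine Finset.sum_congr rfl fun j hj => ?_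
    rw [Function.update_of_ne (Finset.mem_erase.1 hj).1]
  -- the one-variable marginal function
  set P : ℝ → ENNReal := fun c => ∫⁻ y in Set.Icc (0:ℝ) 1, Nf (y + c) * Ff y with hP
  have hPm : Measurable P := by
    apply Measurable.lintegral_prod_right (f := fun (c : ℝ) (y : ℝ) => Nf (y + c) * Ff y)
    exact ((hNm.comp (measurable_snd.add measurable_fst)).mul (hFm.comp measurable_snd))
  have hPper : ∀ (x : ℝ) (n : ℤ), P (x + n) = P x := by
    intro x n
    refine lintegral_congr fun y => ?_
    rw [← add_assoc, hNper]
  -- step 1 : integrate out coordinate a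
  rw [lintegral_eq_lmarginal_univ (fun _ => (0:ℝ)), ← huniv,
    lmarginal_insert' _ hgm hains]
  have hstep1 : (fun x : Fin d → ℝ => ∫⁻ xa, g (Function.update x a xa)
        ∂(fun _ : Fin d => volume.restrict (Set.Icc (0:ℝ) 1)) a)
      = fun x : Fin d → ℝ =>
        P (∑ j ∈ Finset.univ.erase a, ((ct j - cs j : ℤ) : ℝ) * x j) := by
    funext x
    have hCs := hupd Finset.univ a (Finset.mem_univ a) x
    have h1 : ∀ xa : ℝ, g (Function.update x a xa)
        = (fun y => Nf (y + (∑ j ∈ Finset.univ.erase a, ((ct j - cs j : ℤ) : ℝ) * x j)) * Ff y)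
          ((∑ j ∈ Finset.univ.erase a, (cs j : ℝ) * x j) + (ct a : ℤ) * xa) := by
      intro xa
      have hdiff : ∑ j ∈ Finset.univ.erase a, ((ct j - cs j : ℤ) : ℝ) * x j
          = (∑ j ∈ Finset.univ.erase a, (ct j : ℝ) * x j)
            - ∑ j ∈ Finset.univ.erase a, (cs j : ℝ) * x j := by
        rw [← Finset.sum_sub_distrib]
        refine Finset.sum_congr rfl fun j _ => ?_
        push_cast
        ring
      show Nf (∑ j, (ct j : ℝ) * Function.update x a xa j)
            * Ff (∑ j, (cs j : ℝ) * Function.update x a xa j) = _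
      simp only
      rw [hupd Finset.univ a (Finset.mem_univ a) x xa ct,
        hupd Finset.univ a (Finset.mem_univ a) x xa cs]
      congr 1
      · congr 1
        rw [hdiff]
        ring
      · congr 1
        rw [hcta]
        ring
    calc ∫⁻ xa, g (Function.update x a xa)
          ∂(fun _ : Fin d => volume.restrict (Set.Icc (0:ℝ) 1)) a
        = ∫⁻ xa in Set.Icc (0:ℝ) 1,
            (fun y => Nf (y + (∑ j ∈ Finset.univ.erase a, ((ct j - cs j : ℤ) : ℝ) * x j)) * Ff y)
            ((∑ j ∈ Finset.univ.erase a, (cs j : ℝ) * x j) + (ct a : ℤ) * xa) := by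
          exact lintegral_congr fun xa => by rw [h1 xa]
      _ = ∫⁻ y in Set.Icc (0:ℝ) 1,
            Nf (y + (∑ j ∈ Finset.univ.erase a, ((ct j - cs j : ℤ) : ℝ) * x j)) * Ff y := by
          exact aux_key
            (fun y => Nf (y + (∑ j ∈ Finset.univ.erase a, ((ct j - cs j : ℤ) : ℝ) * x j)) * Ff y)
            ((hNm.comp (measurable_id.add_const _)).mul hFm)
            (fun z n => by beta_reduce; rw [add_right_comm, hNper, hFper]) (ct a) hctane _
      _ = P (∑ j ∈ Finset.univ.erase a, ((ct j - cs j : ℤ) : ℝ) * x j) := rfl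
  rw [hstep1]
  -- step 2 : integrate out coordinate b
  have hf2m : Measurable (fun x : Fin d → ℝ =>
      P (∑ j ∈ Finset.univ.erase a, ((ct j - cs j : ℤ) : ℝ) * x j)) :=
    hPm.comp (Finset.measurable_sum _ fun j _ => (measurable_pi_apply j).const_mul _)
  rw [lmarginal_insert' _ hf2m hbw]
  have hstep2 : (fun x : Fin d → ℝ => ∫⁻ xb,
        (fun x : Fin d → ℝ => P (∑ j ∈ Finset.univ.erase a, ((ct j - cs j : ℤ) : ℝ) * x j))
          (Function.update x b xb)
        ∂(fun _ : Fin d => volume.restrict (Set.Icc (0:ℝ) 1)) b)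
      = fun _ : Fin d → ℝ => ∫⁻ y in Set.Icc (0:ℝ) 1, P y := by
    funext x
    have hbmem : b ∈ Finset.univ.erase a := Finset.mem_erase.2 ⟨fun h => hab h.symm, Finset.mem_univ b⟩
    calc ∫⁻ xb, (fun x : Fin d → ℝ =>
            P (∑ j ∈ Finset.univ.erase a, ((ct j - cs j : ℤ) : ℝ) * x j))
            (Function.update x b xb)
          ∂(fun _ : Fin d => volume.restrict (Set.Icc (0:ℝ) 1)) b
        = ∫⁻ xb in Set.Icc (0:ℝ) 1,
            P ((∑ j ∈ (Finset.univ.erase a).erase b, ((ct j - cs j : ℤ) : ℝ) * x j)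
              + (ct b - cs b : ℤ) * xb) := by
          refine lintegral_congr fun xb => ?_
          simp only
          rw [hupd _ b hbmem x xb (fun j => ct j - cs j)]
          rw [add_comm]
      _ = ∫⁻ y in Set.Icc (0:ℝ) 1, P y :=
          aux_key P hPm hPper (ct b - cs b) hdbne _
  rw [hstep2]
  -- step 3 : the remaining integrals are of a constant
  rw [lmarginal]
  rw [lintegral_const, Measure.pi_univ]
  simp only [Measure.restrict_apply_univ, Real.volume_Icc, sub_zero, ENNReal.ofReal_one,
    Finset.prod_const_one, mul_one]
  -- step 4 : compute the remaining integral
  have hIcoIcc : (volume : Measure ℝ).restrict (Set.Icc 0 1)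
      = volume.restrict (Set.Ico (0:ℝ) 1) := (Measure.restrict_congr_set Ico_ae_eq_Icc).symm
  have hNint : ∫⁻ y in Set.Icc (0:ℝ) 1, Nf y = volume.restrict (Set.Icc (0:ℝ) 1) A := by
    have h1 : ∫⁻ y in Set.Ico (0:ℝ) 1, Nf y
        = ∫⁻ y in Set.Ico (0:ℝ) 1, Set.indicator A (fun _ => 1) y :=
      setLIntegral_congr_fun measurableSet_Ico (fun y hy => by
        show Set.indicator A (fun _ => 1) (Int.fract y) = _
        rw [Int.fract_eq_self.2 ⟨hy.1, hy.2⟩])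
    rw [hIcoIcc, h1]
    simp only [lintegral_indicator hA, setLIntegral_one]
  have hFint : ∫⁻ y in Set.Icc (0:ℝ) 1, Ff y = 1 := by
    have h1 : ∫⁻ y in Set.Ico (0:ℝ) 1, Ff y
        = ∫⁻ y in Set.Ico (0:ℝ) 1, ENNReal.ofReal (f y) :=
      setLIntegral_congr_fun measurableSet_Ico (fun y hy => by
        show ENNReal.ofReal (f (Int.fract y)) = _
        rw [Int.fract_eq_self.2 ⟨hy.1, hy.2⟩])
    rw [hIcoIcc, h1, ← hIcoIcc, ← ofReal_integral_eq_lintegral_ofReal hfi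
      ((ae_restrict_iff' measurableSet_Icc).2 (ae_of_all _ fun x hx => hfnn x hx)),
      hfint, ENNReal.ofReal_one]
  calc ∫⁻ y in Set.Icc (0:ℝ) 1, P y
      = ∫⁻ z in Set.Icc (0:ℝ) 1, (∫⁻ y in Set.Icc (0:ℝ) 1, Nf (z + y)) * Ff z := by
        rw [lintegral_lintegral_swap (((hNm.comp (measurable_snd.add measurable_fst)).mul
          (hFm.comp measurable_snd)).aemeasurable)]
        refine lintegral_congr fun z => ?_
        rw [lintegral_mul_const' _ _ ENNReal.ofReal_ne_top]
      _ = ∫⁻ z in Set.Icc (0:ℝ) 1, (∫⁻ y in Set.Icc (0:ℝ) 1, Nf y) * Ff z := by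
        refine lintegral_congr fun z => ?_
        congr 1
        have := aux_key Nf hNm hNper 1 one_ne_zero z
        simpa using this
      _ = (∫⁻ y in Set.Icc (0:ℝ) 1, Nf y) * ∫⁻ z in Set.Icc (0:ℝ) 1, Ff z :=
        lintegral_const_mul _ hFm
      _ = volume.restrict (Set.Icc (0:ℝ) 1) A := by rw [hNint, hFint, mul_one]
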